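/- Let I be a nonzero ideal of k[x_1,...,x_n] with a fixed global monomial ordering, and let G = {g_1,...,g_m} ⊆ I be a finite set such that the leading terms of g_1,...,g_m generate the leading term ideal of I. Then G generates I. -/

import Mathlib

open MvPolynomial

/-- A global monomial ordering on the monomials of `k[x_1,…,x_n]`,
identified with exponent vectors `Fin n →₀ ℕ`. -/
structure MonOrd (n : ℕ) where
  lt : (Fin n →₀ ℕ) → (Fin n →₀ ℕ) → Prop
  strict : IsStrictTotalOrder (Fin n →₀ ℕ) lt
  compat : ∀ a b c, lt a b → lt (a + c) (b + c)
  global : ∀ a, a ≠ 0 → lt 0 a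

noncomputable def MonOrd.linOrd {n : ℕ} (mo : MonOrd n) :
    LinearOrder (Fin n →₀ ℕ) :=
  haveI := mo.strict
  haveI := Classical.decRel mo.lt
  linearOrderOfSTO mo.lt

variable {n : ℕ} {k : Type*} [Field k]

/-- Leading monomial (junk value `0` for the zero polynomial). -/
noncomputable def lmon (mo : MonOrd n) (f : MvPolynomial (Fin n) k) : Fin n →₀ ℕ :=
  letI := mo.linOrd
  if h : f.support.Nonempty then f.support.max' h else 0

/-- Leading term. -/
noncomputable def lterm (mo : MonOrd n) (f : MvPolynomial (Fin n) k) :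
    MvPolynomial (Fin n) k :=
  monomial (lmon mo f) (f.coeff (lmon mo f))

/-- The leading term ideal of `I`. -/
noncomputable def ltIdeal (mo : MonOrd n) (I : Ideal (MvPolynomial (Fin n) k)) :
    Ideal (MvPolynomial (Fin n) k) :=
  Ideal.span { p | ∃ f ∈ I, f ≠ 0 ∧ p = lterm mo f }

/-- The S-polynomial of `f` and `g`. -/
noncomputable def spoly (mo : MonOrd n) (f g : MvPolynomial (Fin n) k) :
    MvPolynomial (Fin n) k :=
  (monomial ((lmon mo f ⊔ lmon mo g) - lmon mo f) (f.coeff (lmon mo f))⁻¹) * f -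
  (monomial ((lmon mo f ⊔ lmon mo g) - lmon mo g) (g.coeff (lmon mo g))⁻¹) * g

/-- `p` has a standard representation with respect to the finite set `G`:
`p = ∑ h_g g` with `lm (h_g g) ≤ lm p` whenever `h_g g ≠ 0`. -/
def stdRep (mo : MonOrd n) (G : Finset (MvPolynomial (Fin n) k))
    (p : MvPolynomial (Fin n) k) : Prop :=
  ∃ h : MvPolynomial (Fin n) k → MvPolynomial (Fin n) k,
    p = ∑ g ∈ G, h g * g ∧
    ∀ g ∈ G, h g * g ≠ 0 → ¬ mo.lt (lmon mo p) (lmon mo (h g * g))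

/-- If `G = {g_1,…,g_m} ⊆ I` is such that the leading terms of the `g_i` generate the
leading term ideal of the nonzero ideal `I`, then `G` generates `I`. -/
-- auxiliary lemmas

lemma mo_not_lt_of_le (mo : MonOrd n) {a b : Fin n →₀ ℕ} (h : a ≤ b) : ¬ mo.lt b a := by
  haveI := mo.strict
  rcases eq_or_ne a b with rfl | hne
  · exact irrefl_of mo.lt a
  · have h0 : b - a ≠ 0 := by
      intro hc
      exact hne (le_antisymm h (tsub_eq_zero_iff_le.mp hc))
    have h1 := mo.compat 0 (b - a) a (mo.global _ h0)
    rw [zero_add, tsub_add_cancel_of_le h] at h1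
    exact fun hlt => irrefl_of mo.lt a (trans_of mo.lt h1 hlt)

lemma mo_wf (mo : MonOrd n) : WellFounded mo.lt := by
  haveI := mo.strict
  rw [RelEmbedding.wellFounded_iff_isEmpty]
  constructor
  intro e
  have hpwo : WellQuasiOrdered ((· ≤ ·) : (Fin n → ℕ) → (Fin n → ℕ) → Prop) :=
    wellQuasiOrdered_le
  obtain ⟨i, j, hij, hle⟩ := hpwo (fun i => ⇑(e i))
  have hle' : (e i : Fin n →₀ ℕ) ≤ e j := by
    intro x; exact hle x
  exact mo_not_lt_of_le mo hle' (e.map_rel_iff.mpr hij)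

lemma lmon_mem (mo : MonOrd n) {f : MvPolynomial (Fin n) k} (hf : f ≠ 0) :
    lmon mo f ∈ f.support := by
  letI := mo.linOrd
  rw [lmon, dif_pos (support_nonempty.mpr hf)]
  exact Finset.max'_mem _ _

lemma not_lmon_lt_mem (mo : MonOrd n) {f : MvPolynomial (Fin n) k} {d : Fin n →₀ ℕ}
    (hd : d ∈ f.support) : ¬ mo.lt (lmon mo f) d := by
  letI := mo.linOrd
  rw [lmon, dif_pos ⟨d, hd⟩]
  exact not_lt.mpr (Finset.le_max' _ _ hd)

lemma coeff_eq_zero_of_lmon_lt (mo : MonOrd n) {f : MvPolynomial (Fin n) k} {d : Fin n →₀ ℕ}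
    (hd : mo.lt (lmon mo f) d) : f.coeff d = 0 := by
  by_contra hc
  exact not_lmon_lt_mem mo (mem_support_iff.mpr hc) hd

theorem stmt4 (mo : MonOrd n) (I : Ideal (MvPolynomial (Fin n) k)) (hI : I ≠ ⊥)
    (m : ℕ) (g : Fin m → MvPolynomial (Fin n) k) (hsub : ∀ i, g i ∈ I)
    (hlt : Ideal.span (Set.range fun i => lterm mo (g i)) = ltIdeal mo I) :
    Ideal.span (Set.range g) = I := by
  classical
  haveI := mo.strict
  apply le_antisymm
  · rw [Ideal.span_le]; rintro _ ⟨i, rfl⟩; exact hsub i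
  -- the monomial ideal description
  set S : Set (Fin n →₀ ℕ) := {s | ∃ i, g i ≠ 0 ∧ s = lmon mo (g i)} with hS
  have hspan : Ideal.span (Set.range fun i => lterm mo (g i)) =
      Ideal.span ((fun s => monomial s (1 : k)) '' S) := by
    apply le_antisymm
    · rw [Ideal.span_le]
      rintro _ ⟨i, rfl⟩
      show lterm mo (g i) ∈ _
      by_cases hgi : g i = 0
      · have : lterm mo (g i) = 0 := by
          simp [lterm, hgi]
        rw [this]; exact Ideal.zero_mem _
      · have : lterm mo (g i) = C ((g i).coeff (lmon mo (g i))) *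
            monomial (lmon mo (g i)) (1 : k) := by
          rw [C_mul_monomial, mul_one, lterm]
        rw [this]
        exact Ideal.mul_mem_left _ _ (Ideal.subset_span ⟨_, ⟨i, hgi, rfl⟩, rfl⟩)
    · rw [Ideal.span_le]
      rintro _ ⟨s, ⟨i, hgi, rfl⟩, rfl⟩
      show monomial (lmon mo (g i)) (1 : k) ∈ _
      have hc : (g i).coeff (lmon mo (g i)) ≠ 0 :=
        mem_support_iff.mp (lmon_mem mo hgi)
      have : monomial (lmon mo (g i)) (1 : k) =
          C ((g i).coeff (lmon mo (g i)))⁻¹ * lterm mo (g i) := by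
        rw [lterm, C_mul_monomial, inv_mul_cancel₀ hc]
      rw [this]
      exact Ideal.mul_mem_left _ _ (Ideal.subset_span ⟨i, rfl⟩)
  -- main claim by well-founded induction
  have key : ∀ L : Fin n →₀ ℕ, ∀ f, f ∈ I → lmon mo f = L → f ∈ Ideal.span (Set.range g) := by
    intro L
    induction L using WellFounded.induction (mo_wf mo) with
    | _ L IH =>
      intro f hfI hfL
      by_cases hf0 : f = 0
      · rw [hf0]; exact Ideal.zero_mem _
      -- leading term is in the monomial ideal
      have hlf : lterm mo f ∈ Ideal.span ((fun s => monomial s (1 : k)) '' S) := by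
        rw [← hspan, hlt]
        exact Ideal.subset_span ⟨f, hfI, hf0, rfl⟩
      have hcf : f.coeff (lmon mo f) ≠ 0 := mem_support_iff.mp (lmon_mem mo hf0)
      rw [mem_ideal_span_monomial_image] at hlf
      obtain ⟨si, hsi, hsile⟩ := hlf (lmon mo f) (by
        rw [lterm, support_monomial, if_neg hcf]; exact Finset.mem_singleton_self _)
      obtain ⟨i, hgi, rfl⟩ := hsi
      have hcg : (g i).coeff (lmon mo (g i)) ≠ 0 := mem_support_iff.mp (lmon_mem mo hgi)
      set c : k := f.coeff (lmon mo f) / (g i).coeff (lmon mo (g i)) with hc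
      set δ : Fin n →₀ ℕ := lmon mo f - lmon mo (g i) with hδ
      set f' : MvPolynomial (Fin n) k := f - monomial δ c * g i with hf'
      have hmem : monomial δ c * g i ∈ Ideal.span (Set.range g) :=
        Ideal.mul_mem_left _ _ (Ideal.subset_span ⟨i, rfl⟩)
      have hf'I : f' ∈ I := I.sub_mem hfI (Ideal.mul_mem_left _ _ (hsub i))
      -- coefficients of f' vanish at and above lmon f
      have hsupp : ∀ d, ¬ mo.lt d (lmon mo f) → f'.coeff d = 0 := by
        intro d hdge
        rcases trichotomous_of mo.lt d (lmon mo f) with h | h | h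
        · exact absurd h hdge
        · subst h
          have h1 : lmon mo f - δ = lmon mo (g i) := tsub_tsub_cancel_of_le hsile
          rw [hf', coeff_sub, coeff_monomial_mul', if_pos tsub_le_self, h1, hc,
            div_mul_cancel₀ _ hcg, sub_self]
        · rw [hf', coeff_sub, coeff_monomial_mul']
          rw [coeff_eq_zero_of_lmon_lt mo h]
          split_ifs with hδd
          · rcases eq_or_ne ((g i).coeff (d - δ)) 0 with h0 | h0
            · rw [h0, mul_zero, sub_zero]
            · exfalso
              have hmem' := mem_support_iff.mpr h0
              have h1 := not_lmon_lt_mem mo hmem'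
              rcases trichotomous_of mo.lt (d - δ) (lmon mo (g i)) with h2 | h2 | h2
              · have h3 := mo.compat _ _ δ h2
                rw [tsub_add_cancel_of_le hδd] at h3
                have h4 : lmon mo (g i) + δ = lmon mo f := by
                  rw [hδ, add_comm, tsub_add_cancel_of_le hsile]
                rw [h4] at h3
                exact irrefl_of mo.lt _ (trans_of mo.lt h h3)
              · have h4 : d = lmon mo f := by
                  rw [← tsub_add_cancel_of_le hδd, h2, hδ, add_comm,
                    tsub_add_cancel_of_le hsile]
                rw [h4] at h
                exact irrefl_of mo.lt _ h
              · exact h1 h2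
          · rw [sub_zero]
      by_cases hf'0 : f' = 0
      · have : f = monomial δ c * g i := by
          have := sub_eq_zero.mp (hf' ▸ hf'0)
          exact this
        rw [this]; exact hmem
      · have hlt' : mo.lt (lmon mo f') L := by
          rw [← hfL]
          by_contra hcon
          exact hf'0 (by
            have := hsupp (lmon mo f') hcon
            exact absurd this (mem_support_iff.mp (lmon_mem mo hf'0)))
        have hind := IH _ hlt' f' hf'I rfl
        have : f = f' + monomial δ c * g i := by rw [hf']; ring
        rw [this]
        exact Ideal.add_mem _ hind hmem
  intro f hf
  exact key _ f hf rfl
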